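/- arXiv:0907.1722 — 2 statements merged into one kernel-verified Lean document; each statement's English description precedes it below -/
import Mathlib

section
/- Let (E, sim, ser) be a comtrace alphabet. A step sequence u is in GMC-form if and only if u is canonical. -/
variable {E : Type*}

/-- A step over a comtrace alphabet `(E, sim, ser)`: a nonempty finite set of events,
pairwise related by `sim`. -/
def IsStep [DecidableEq E] (sim : E → E → Prop) (A : Finset E) : Prop :=
  A.Nonempty ∧ ∀ a ∈ A, ∀ b ∈ A, a ≠ b → sim a b

/-- A step sequence: a finite list of steps. -/
def IsStepSeq [DecidableEq E] (sim : E → E → Prop) (u : List (Finset E)) : Prop :=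
  ∀ A ∈ u, IsStep sim A

/-- The generating relation of comtrace congruence:
`w·A·z ≈ w·B·C·z` whenever `A`, `B`, `C` are steps with `B ∪ C = A` and `B × C ⊆ ser`. -/
def CTBase [DecidableEq E] (sim ser : E → E → Prop) (u v : List (Finset E)) : Prop :=
  ∃ (w z : List (Finset E)) (A B C : Finset E),
    IsStepSeq sim w ∧ IsStepSeq sim z ∧
    IsStep sim A ∧ IsStep sim B ∧ IsStep sim C ∧
    B ∪ C = A ∧ (∀ b ∈ B, ∀ c ∈ C, ser b c) ∧
    u = w ++ A :: z ∧ v = w ++ B :: C :: z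

/-- The least equivalence relation containing `base`. -/
def LeastEquiv {α : Type*} (base : α → α → Prop) (x y : α) : Prop :=
  ∀ c : α → α → Prop, Equivalence c → (∀ a b, base a b → c a b) → c x y

/-- Comtrace congruence: the least equivalence relation containing `CTBase`. -/
def CTEquiv [DecidableEq E] (sim ser : E → E → Prop) :
    List (Finset E) → List (Finset E) → Prop :=
  LeastEquiv (CTBase sim ser)

/-- Forward dependency on steps: `(A, B) ∈ FD` iff there is a step `C ⊆ B` with
`A × C ⊆ ser` and `C × (B \ C) ⊆ ser`. -/
def FD [DecidableEq E] (sim ser : E → E → Prop) (A B : Finset E) : Prop :=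
  ∃ C : Finset E, IsStep sim C ∧ C ⊆ B ∧
    (∀ a ∈ A, ∀ c ∈ C, ser a c) ∧ (∀ c ∈ C, ∀ b ∈ B \ C, ser c b)

/-- A step sequence `A₁…A_k` is canonical iff `(Aᵢ, Aᵢ₊₁) ∉ FD` for all `1 ≤ i < k`. -/
def Canonical [DecidableEq E] (sim ser : E → E → Prop) (u : List (Finset E)) : Prop :=
  u.Chain' (fun A B => ¬ FD sim ser A B)

/-- Greedy maximally concurrent form: each step of `u` is at least as large as the first
step of any step sequence congruent to the corresponding suffix of `u`. -/
def GMCForm [DecidableEq E] (sim ser : E → E → Prop) (u : List (Finset E)) : Prop :=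
  ∀ i : Fin u.length, ∀ (B : Finset E) (y : List (Finset E)),
    IsStep sim B → IsStepSeq sim y →
    CTEquiv sim ser (B :: y) (u.drop (i : ℕ)) → B.card ≤ (u.get i).card





section CTAux
variable [DecidableEq E]

def occList : List (Finset E) → E → List ℕ
  | [], _ => []
  | A :: t, e => (if e ∈ A then [0] else []) ++ (occList t e).map (· + 1)

lemma occList_cons (A : Finset E) (t : List (Finset E)) (e : E) :
    occList (A :: t) e = (if e ∈ A then [0] else []) ++ (occList t e).map (· + 1) := rfl

lemma occList_append (u v : List (Finset E)) (e : E) :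
    occList (u ++ v) e = occList u e ++ (occList v e).map (· + u.length) := by
  induction u with
  | nil => simp [occList]
  | cons A t ih =>
    simp only [List.cons_append, occList_cons, ih, List.map_append, List.map_map,
      List.append_assoc, List.length_cons]
    rfl

lemma mem_occList {u : List (Finset E)} {e : E} {p : ℕ} :
    p ∈ occList u e ↔ p < u.length ∧ e ∈ u.getD p ∅ := by
  induction u generalizing p with
  | nil => simp [occList]
  | cons A t ih =>
    simp only [occList_cons, List.mem_append, List.mem_map]
    constructor
    · rintro (h | ⟨q, hq, rfl⟩)
      · by_cases hA : e ∈ A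
        · simp [hA] at h; subst h; simpa using hA
        · simp [hA] at h
      · rcases ih.mp hq with ⟨h1, h2⟩
        exact ⟨by simpa using Nat.succ_lt_succ h1, by simpa using h2⟩
    · rintro ⟨h1, h2⟩
      cases p with
      | zero => left; simp at h2; simp [h2]
      | succ q =>
        right
        exact ⟨q, ih.mpr ⟨by simpa using h1, by simpa using h2⟩, rfl⟩

def cnt (u : List (Finset E)) (e : E) : ℕ := (occList u e).length

def posn (u : List (Finset E)) (e : E) (k : ℕ) : ℕ := (occList u e).getD k 0

lemma posn_mem {u : List (Finset E)} {e : E} {k : ℕ} (h : k < cnt u e) :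
    posn u e k ∈ occList u e := by
  unfold posn
  rw [List.getD_eq_getElem _ _ h]
  exact List.getElem_mem h

lemma exists_posn {u : List (Finset E)} {e : E} {i : ℕ} (hi : i < u.length)
    (he : e ∈ u.getD i ∅) : ∃ k, k < cnt u e ∧ posn u e k = i := by
  have hmem : i ∈ occList u e := mem_occList.mpr ⟨hi, he⟩
  obtain ⟨k, hk, hk'⟩ := List.getElem_of_mem hmem
  exact ⟨k, hk, by rw [posn, List.getD_eq_getElem _ _ hk, hk']⟩

def sig (n : ℕ) (c : Bool) (p : ℕ) : ℕ :=
  if p < n then p else if p = n then (if c then n + 1 else n) else p + 1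

lemma sig_lt_iff {n p q : ℕ} {cp cq : Bool}
    (h : ¬(p = n ∧ q = n ∧ cp = false ∧ cq = true)) :
    sig n cp p < sig n cq q ↔ p < q := by
  unfold sig
  rcases cp <;> rcases cq <;> simp_all only [Bool.false_eq_true, Bool.true_eq_false,
    not_false_eq_true, and_true, and_false, not_and, if_true, if_false, not_true_eq_false] <;>
    split_ifs <;> omega

lemma map_sig_low {l : List ℕ} {n : ℕ} {c : Bool} (h : ∀ p ∈ l, p < n) :
    l.map (sig n c) = l := by
  have h2 : l.map (sig n c) = l.map id := by
    apply List.map_congr_left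
    intro p hp
    have := h p hp
    unfold sig
    simp only [id]
    split_ifs <;> omega
  rw [h2, List.map_id]

lemma occList_split (w z : List (Finset E)) (A B C : Finset E)
    (hBC : B ∪ C = A) (hd : ∀ x, x ∈ B → x ∈ C → False) (e : E) :
    occList (w ++ B :: C :: z) e
      = (occList (w ++ A :: z) e).map (sig w.length (decide (e ∈ C))) := by
  have hw : ∀ p ∈ occList w e, p < w.length := fun p hp => (mem_occList.mp hp).1
  by_cases hB : e ∈ B <;> by_cases hC : e ∈ C
  · exact absurd (hd e hB hC) (fun h => h)
  · have hA : e ∈ A := by rw [← hBC]; exact Finset.mem_union_left _ hB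
    simp [occList_append, occList_cons, hA, hB, hC, List.map_map, map_sig_low hw]
    refine ⟨?_, fun a _ => ?_⟩
    · simp [sig]
      try omega
    · simp only [sig]
      split_ifs <;> simp_all <;> omega
  · have hA : e ∈ A := by rw [← hBC]; exact Finset.mem_union_right _ hC
    simp [occList_append, occList_cons, hA, hB, hC, List.map_map, map_sig_low hw]
    refine ⟨?_, fun a _ => ?_⟩
    · simp [sig]
      try omega
    · simp only [sig]
      split_ifs <;> simp_all <;> omega
  · have hA : e ∉ A := by rw [← hBC]; simp [hB, hC]
    simp [occList_append, occList_cons, hA, hB, hC, List.map_map, map_sig_low hw]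
    intro a _
    simp only [sig]
    split_ifs <;> simp_all <;> omega

lemma cnt_split (w z : List (Finset E)) (A B C : Finset E)
    (hBC : B ∪ C = A) (hd : ∀ x, x ∈ B → x ∈ C → False) (e : E) :
    cnt (w ++ B :: C :: z) e = cnt (w ++ A :: z) e := by
  unfold cnt
  rw [occList_split w z A B C hBC hd e, List.length_map]

lemma posn_split (w z : List (Finset E)) (A B C : Finset E)
    (hBC : B ∪ C = A) (hd : ∀ x, x ∈ B → x ∈ C → False) (e : E) {k : ℕ}
    (hk : k < cnt (w ++ A :: z) e) :
    posn (w ++ B :: C :: z) e k = sig w.length (decide (e ∈ C)) (posn (w ++ A :: z) e k) := by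
  unfold posn
  rw [occList_split w z A B C hBC hd e, List.getD_eq_getElem _ _ (by simpa [cnt] using hk),
    List.getElem_map, List.getD_eq_getElem _ _ hk]
  rfl

end CTAux

section CTInv
variable [DecidableEq E]

def PosInv (ser : E → E → Prop) (u v : List (Finset E)) : Prop :=
  (∀ e, cnt u e = cnt v e) ∧
  ∀ e f k m, ¬ ser e f → k < cnt u e → m < cnt u f →
    (posn u e k < posn u f m ↔ posn v e k < posn v f m)

lemma posInv_equivalence (ser : E → E → Prop) : Equivalence (PosInv (E := E) ser) := by
  constructor
  · intro x
    exact ⟨fun _ => rfl, fun _ _ _ _ _ _ _ => Iff.rfl⟩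
  · rintro x y ⟨h1, h2⟩
    refine ⟨fun e => (h1 e).symm, fun e f k m hs hk hm => ?_⟩
    have hk' : k < cnt x e := by have := h1 e; omega
    have hm' : m < cnt x f := by have := h1 f; omega
    exact (h2 e f k m hs hk' hm').symm
  · rintro x y z ⟨h1, h2⟩ ⟨g1, g2⟩
    refine ⟨fun e => (h1 e).trans (g1 e), fun e f k m hs hk hm => ?_⟩
    have hk' : k < cnt y e := by have := h1 e; omega
    have hm' : m < cnt y f := by have := h1 f; omega
    exact (h2 e f k m hs hk hm).trans (g2 e f k m hs hk' hm')

variable {sim ser : E → E → Prop}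

lemma posInv_base (hsim_irr : ∀ a, ¬ sim a a) (hser_sub : ∀ a b, ser a b → sim a b)
    {u v : List (Finset E)} (h : CTBase sim ser u v) : PosInv ser u v := by
  obtain ⟨w, z, A, B, C, _, _, _, _, _, hBC, hserBC, rfl, rfl⟩ := h
  have hd : ∀ x, x ∈ B → x ∈ C → False := fun x hB hC =>
    hsim_irr x (hser_sub x x (hserBC x hB x hC))
  refine ⟨fun e => (cnt_split w z A B C hBC hd e).symm, fun e f k m hs hk hm => ?_⟩
  rw [posn_split w z A B C hBC hd e hk, posn_split w z A B C hBC hd f hm]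
  refine (sig_lt_iff ?_).symm
  rintro ⟨he, hf, hec, hfc⟩
  have hgetD : (w ++ A :: z).getD w.length ∅ = A := by
    have hlt : w.length < (w ++ A :: z).length := by simp
    rw [List.getD_eq_getElem _ _ hlt, List.getElem_append_right (le_refl w.length)]
    simp
  have hgA : ∀ g : E, ∀ j, j < cnt (w ++ A :: z) g → posn (w ++ A :: z) g j = w.length →
      g ∈ A := by
    intro g j hj hpos
    have hmem := mem_occList.mp (posn_mem hj)
    rw [hpos, hgetD] at hmem
    exact hmem.2
  have heA : e ∈ A := hgA e k hk he
  have hfA : f ∈ A := hgA f m hm hf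
  have heB : e ∈ B := by
    have hm2 : e ∈ B ∪ C := hBC ▸ heA
    rcases Finset.mem_union.mp hm2 with h | h
    · exact h
    · exact absurd h (of_decide_eq_false hec)
  have hfC : f ∈ C := of_decide_eq_true hfc
  exact hs (hserBC e heB f hfC)

end CTInv

section CTMain
variable [DecidableEq E] {sim ser : E → E → Prop}

lemma ctequiv_symm {u v : List (Finset E)} (h : CTEquiv sim ser u v) : CTEquiv sim ser v u :=
  fun c hc hb => hc.symm (h c hc hb)

lemma ctequiv_trans {u v w : List (Finset E)} (h1 : CTEquiv sim ser u v)
    (h2 : CTEquiv sim ser v w) : CTEquiv sim ser u w :=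
  fun c hc hb => hc.trans (h1 c hc hb) (h2 c hc hb)

lemma ctequiv_of_base {u v : List (Finset E)} (h : CTBase sim ser u v) :
    CTEquiv sim ser u v := fun _ _ hb => hb u v h

lemma posInv_of_ctequiv (hsim_irr : ∀ a, ¬ sim a a) (hser_sub : ∀ a b, ser a b → sim a b)
    {u v : List (Finset E)} (h : CTEquiv sim ser u v) : PosInv ser u v :=
  h (PosInv ser) (posInv_equivalence ser)
    (fun _ _ hb => posInv_base hsim_irr hser_sub hb)

lemma head_mem {u : List (Finset E)} (hu : IsStepSeq sim u) (hcan : Canonical sim ser u)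
    {b : Finset E} {y : List (Finset E)} (hinv : PosInv ser (b :: y) u)
    {e : E} (he : e ∈ b) : 0 < u.length ∧ e ∈ u.getD 0 ∅ := by
  classical
  have hcnt1 : 0 < cnt (b :: y) e := by
    unfold cnt
    rw [occList_cons]
    simp [he]
  have hcntu : 0 < cnt u e := by rw [← hinv.1 e]; exact hcnt1
  have hmem := mem_occList.mp (posn_mem hcntu)
  have hpv : posn (b :: y) e 0 = 0 := by
    unfold posn
    rw [occList_cons]
    simp [he]
  by_cases h0 : posn u e 0 = 0
  · rw [h0] at hmem
    exact ⟨hmem.1, hmem.2⟩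
  · exfalso
    obtain ⟨j', hj'⟩ : ∃ j', posn u e 0 = j' + 1 := ⟨posn u e 0 - 1, by omega⟩
    rw [hj'] at hmem
    obtain ⟨hj1, hAj⟩ := hmem
    have hj'lt : j' < u.length := by omega
    haveI : DecidablePred (fun f : E =>
        ∃ k, k < cnt u f ∧ posn u f k = j' + 1 ∧ posn (b :: y) f k = 0) :=
      fun _ => Classical.dec _
    set Cs : Finset E := (u.getD (j' + 1) ∅).filter
      (fun f => ∃ k, k < cnt u f ∧ posn u f k = j' + 1 ∧ posn (b :: y) f k = 0) with hCsdef
    have heCs : e ∈ Cs := Finset.mem_filter.mpr ⟨hAj, 0, hcntu, hj', hpv⟩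
    have hCs_sub : Cs ⊆ u.getD (j' + 1) ∅ := Finset.filter_subset _ _
    have hAjmem : u.getD (j' + 1) ∅ ∈ u := by
      rw [List.getD_eq_getElem _ _ hj1]
      exact List.getElem_mem hj1
    have hAjstep : IsStep sim (u.getD (j' + 1) ∅) := hu _ hAjmem
    have hCs_step : IsStep sim Cs :=
      ⟨⟨e, heCs⟩, fun a ha b hb hab => hAjstep.2 a (hCs_sub ha) b (hCs_sub hb) hab⟩
    have hser1 : ∀ g ∈ u.getD j' ∅, ∀ f ∈ Cs, ser g f := by
      intro g hg f hf
      obtain ⟨kf, hkf, hpf, hpf0⟩ := (Finset.mem_filter.mp hf).2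
      obtain ⟨kg, hkg, hpg⟩ := exists_posn hj'lt hg
      by_contra hns
      have hiff := hinv.2 g f kg kf hns (by rw [hinv.1 g]; exact hkg)
        (by rw [hinv.1 f]; exact hkf)
      have := hiff.mpr (by rw [hpg, hpf]; omega)
      rw [hpf0] at this
      omega
    have hser2 : ∀ f ∈ Cs, ∀ h ∈ (u.getD (j' + 1) ∅) \ Cs, ser f h := by
      intro f hf h hh
      obtain ⟨kf, hkf, hpf, hpf0⟩ := (Finset.mem_filter.mp hf).2
      rw [Finset.mem_sdiff] at hh
      obtain ⟨kh, hkh, hph⟩ := exists_posn hj1 hh.1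
      have hnz : posn (b :: y) h kh ≠ 0 := by
        intro hz
        exact hh.2 (Finset.mem_filter.mpr ⟨hh.1, kh, hkh, hph, hz⟩)
      by_contra hns
      have hiff := hinv.2 f h kf kh hns (by rw [hinv.1 f]; exact hkf)
        (by rw [hinv.1 h]; exact hkh)
      have := hiff.mp (by rw [hpf0]; omega)
      rw [hpf, hph] at this
      omega
    have hnFD := List.isChain_iff_getElem.mp hcan j' (by omega)
    apply hnFD
    have hg1 : u.get ⟨j', by omega⟩ = u.getD j' ∅ := by
      rw [List.getD_eq_getElem _ _ hj'lt]
      rfl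
    have hg2 : u.get ⟨j' + 1, by omega⟩ = u.getD (j' + 1) ∅ := by
      rw [List.getD_eq_getElem _ _ hj1]
      rfl
    change FD sim ser (u.get ⟨j', hj'lt⟩) (u.get ⟨j' + 1, hj1⟩)
    rw [hg1, hg2]
    exact ⟨Cs, hCs_step, hCs_sub, hser1, hser2⟩



lemma chain'_drop {α : Type*} {R : α → α → Prop} :
    ∀ (n : ℕ) (l : List α), l.Chain' R → (l.drop n).Chain' R
  | 0, l, h => h
  | n + 1, l, h => by
    have hd : l.drop (n + 1) = (l.drop n).tail := by
      rw [← List.drop_one, List.drop_drop]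
    rw [hd]
    exact (chain'_drop n l h).tail

end CTMain

/-- A step sequence is in GMC-form iff it is canonical. -/
theorem stmt7 [DecidableEq E] [Fintype E] (sim ser : E → E → Prop)
    (hsim_irr : ∀ a, ¬ sim a a) (hsim_symm : ∀ a b, sim a b → sim b a)
    (hser_sub : ∀ a b, ser a b → sim a b)
    (u : List (Finset E)) (hu : IsStepSeq sim u) :
    GMCForm sim ser u ↔ Canonical sim ser u := by
  constructor
  · -- GMC → canonical
    intro hg
    rw [Canonical, List.Chain', List.isChain_iff_getElem]
    intro i hi
    intro hFD
    obtain ⟨C, hCstep, hCsub, hserAC, hserCB⟩ := hFD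
    have hilen : i < u.length := by omega
    have hi1len : i + 1 < u.length := by omega
    set A1 := u.get ⟨i, hilen⟩ with hA1def
    set A2 := u.get ⟨i + 1, hi1len⟩ with hA2def
    have hA1 : IsStep sim A1 := hu A1 (List.get_mem u ⟨i, hilen⟩)
    have hA2 : IsStep sim A2 := hu A2 (List.get_mem u ⟨i+1, hi1len⟩)
    have hdrop : u.drop i = A1 :: A2 :: u.drop (i + 2) := by
      rw [List.drop_eq_getElem_cons hilen, List.drop_eq_getElem_cons hi1len]
      rfl
    have hdisj : ∀ x, x ∈ A1 → x ∈ C → False := fun x h1 h2 =>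
      hsim_irr x (hser_sub x x (hserAC x h1 x h2))
    have hCne : C.Nonempty := hCstep.1
    have hstepU : IsStep sim (A1 ∪ C) := by
      refine ⟨hCne.mono Finset.subset_union_right, fun a ha b hb hab => ?_⟩
      rcases Finset.mem_union.mp ha with ha' | ha' <;>
        rcases Finset.mem_union.mp hb with hb' | hb'
      · exact hA1.2 a ha' b hb' hab
      · exact hser_sub a b (hserAC a ha' b hb')
      · exact hsim_symm b a (hser_sub b a (hserAC b hb' a ha'))
      · exact hCstep.2 a ha' b hb' hab
    have hrest : IsStepSeq sim (u.drop (i + 2)) := fun A hA =>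
      hu A (List.drop_subset _ _ hA)
    have hcardU : A1.card < (A1 ∪ C).card := by
      have hd : Disjoint A1 C := Finset.disjoint_left.mpr fun {x} h1 h2 => hdisj x h1 h2
      rw [Finset.card_union_of_disjoint hd]
      have := Finset.card_pos.mpr hCne
      omega
    by_cases hCeq : A2 \ C = ∅
    · have hCA2 : C = A2 :=
        Finset.Subset.antisymm hCsub (Finset.sdiff_eq_empty_iff_subset.mp hCeq)
      have hbase : CTBase sim ser ((A1 ∪ C) :: u.drop (i + 2)) (u.drop i) := by
        refine ⟨[], u.drop (i + 2), A1 ∪ C, A1, C, ?_, hrest, hstepU, hA1, hCstep, rfl,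
          hserAC, rfl, ?_⟩
        · intro X hX
          simp at hX
        · rw [hdrop, hCA2]
          rfl
      have hcard := hg ⟨i, hilen⟩ (A1 ∪ C) (u.drop (i + 2)) hstepU hrest
        (ctequiv_of_base hbase)
      rw [← hA1def] at hcard
      omega
    · have hne : (A2 \ C).Nonempty := Finset.nonempty_iff_ne_empty.mpr hCeq
      have hsdstep : IsStep sim (A2 \ C) :=
        ⟨hne, fun a ha b hb hab =>
          hA2.2 a (Finset.sdiff_subset ha) b (Finset.sdiff_subset hb) hab⟩
      have hbase1 : CTBase sim ser (u.drop i) (A1 :: C :: (A2 \ C) :: u.drop (i + 2)) := by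
        refine ⟨[A1], u.drop (i + 2), A2, C, A2 \ C, ?_, hrest, hA2, hCstep, hsdstep,
          Finset.union_sdiff_of_subset hCsub, hserCB, ?_, rfl⟩
        · intro X hX
          simp at hX
          subst hX
          exact hA1
        · rw [hdrop]
          rfl
      have hbase2 : CTBase sim ser ((A1 ∪ C) :: (A2 \ C) :: u.drop (i + 2))
          (A1 :: C :: (A2 \ C) :: u.drop (i + 2)) := by
        refine ⟨[], (A2 \ C) :: u.drop (i + 2), A1 ∪ C, A1, C, ?_, ?_, hstepU, hA1, hCstep,
          rfl, hserAC, rfl, rfl⟩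
        · intro X hX
          simp at hX
        · intro X hX
          rcases List.mem_cons.mp hX with h | h
          · subst h; exact hsdstep
          · exact hrest X h
      have hequiv : CTEquiv sim ser ((A1 ∪ C) :: (A2 \ C) :: u.drop (i + 2)) (u.drop i) :=
        ctequiv_trans (ctequiv_of_base hbase2) (ctequiv_symm (ctequiv_of_base hbase1))
      have hyss : IsStepSeq sim ((A2 \ C) :: u.drop (i + 2)) := by
        intro X hX
        rcases List.mem_cons.mp hX with h | h
        · subst h; exact hsdstep
        · exact hrest X h
      have hcard := hg ⟨i, hilen⟩ (A1 ∪ C) ((A2 \ C) :: u.drop (i + 2)) hstepU hyss hequiv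
      rw [← hA1def] at hcard
      omega
  · -- canonical → GMC
    intro hcan
    intro i B y hB hy heq
    have hinv : PosInv ser (B :: y) (u.drop (i : ℕ)) :=
      posInv_of_ctequiv hsim_irr hser_sub heq
    have hdropss : IsStepSeq sim (u.drop (i : ℕ)) := fun A hA =>
      hu A (List.drop_subset _ _ hA)
    have hdropcan : Canonical sim ser (u.drop (i : ℕ)) := chain'_drop _ _ hcan
    have hgetD : (u.drop (i : ℕ)).getD 0 ∅ = u.get i := by
      have hlen : 0 < (u.drop (i : ℕ)).length := by
        rw [List.length_drop]
        omega
      rw [List.getD_eq_getElem _ _ hlen, List.getElem_drop]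
      simp
    refine Finset.card_le_card fun e he => ?_
    have := (head_mem hdropss hdropcan hinv he).2
    rwa [hgetD] at this
end

section
/- Let (E, sim, ser) be a comtrace alphabet. If u is a canonical step sequence and u ≡ v, then length(u) ≤ length(v). -/
variable {E : Type*}

section AuxOcc

variable [DecidableEq E]

def occPos : List (Finset E) → E → List ℕ
  | [], _ => []
  | A :: w, a => (if a ∈ A then [0] else []) ++ (occPos w a).map (· + 1)

lemma occPos_append (x y : List (Finset E)) (a : E) :
    occPos (x ++ y) a = occPos x a ++ (occPos y a).map (· + x.length) := by
  induction x with
  | nil => simp [occPos]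
  | cons A x ih =>
      show (if a ∈ A then [0] else []) ++ (occPos (x ++ y) a).map (· + 1)
        = ((if a ∈ A then [0] else []) ++ (occPos x a).map (· + 1))
            ++ (occPos y a).map (· + (x.length + 1))
      rw [ih, List.map_append, List.map_map]
      simp only [List.append_assoc]
      congr 2

lemma mem_occPos (w : List (Finset E)) (a : E) (i : ℕ) :
    i ∈ occPos w a ↔ ∃ S, w[i]? = some S ∧ a ∈ S := by
  induction w generalizing i with
  | nil => simp [occPos]
  | cons A w ih =>
      cases i with
      | zero =>
          simp only [occPos, List.mem_append, List.mem_map, List.getElem?_cons_zero,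
            Option.some.injEq]
          constructor
          · rintro (h | ⟨p, _, h⟩)
            · split_ifs at h with hA
              · exact ⟨A, rfl, by simpa using hA⟩
              · simp at h
            · omega
          · rintro ⟨S, rfl, haS⟩
            left; simp [haS]
      | succ j =>
          have h1 : (j + 1) ∈ occPos (A :: w) a ↔ j ∈ occPos w a := by
            simp only [occPos, List.mem_append, List.mem_map]
            constructor
            · rintro (h | ⟨p, hp, h⟩)
              · split_ifs at h with hA <;> simp at h
              · obtain rfl : p = j := by omega
                exact hp
            · intro h
              right
              exact ⟨j, h, rfl⟩
          rw [h1, ih, List.getElem?_cons_succ]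

lemma lt_length_of_mem_occPos {w : List (Finset E)} {a : E} {i : ℕ}
    (h : i ∈ occPos w a) : i < w.length := by
  obtain ⟨S, hS, -⟩ := (mem_occPos w a i).mp h
  exact (List.getElem?_eq_some_iff.mp hS).1

lemma occPos_cons (A : Finset E) (w : List (Finset E)) (a : E) :
    occPos (A :: w) a = (if a ∈ A then [0] else []) ++ (occPos w a).map (· + 1) := rfl

lemma occPos_move (x z : List (Finset E)) (A B C : Finset E)
    (hBC : B ∪ C = A) (hdisj : ∀ e, e ∈ B → e ∉ C) (a : E) :
    occPos (x ++ B :: C :: z) a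
      = (occPos (x ++ A :: z) a).map (fun p =>
          if p < x.length then p
          else if p = x.length then (if a ∈ B then x.length else x.length + 1)
          else p + 1) := by
  have hmemA : a ∈ A ↔ (a ∈ B ∨ a ∈ C) := by rw [← hBC]; simp
  rw [occPos_append, occPos_append, List.map_append, List.map_map]
  congr 1
  · conv_lhs => rw [← List.map_id (occPos x a)]
    apply List.map_congr_left
    intro p hp
    have hlt : p < x.length := lt_length_of_mem_occPos hp
    simp [hlt]
  · simp only [occPos_cons, List.map_append, List.map_map]
    have hM : ∀ (f₁ f₂ : ℕ → ℕ), (∀ m, f₁ m = f₂ m) →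
        (occPos z a).map f₁ = (occPos z a).map f₂ :=
      fun f₁ f₂ h => List.map_congr_left (fun m _ => h m)
    by_cases hB : a ∈ B
    · have hC : a ∉ C := hdisj a hB
      have hA : a ∈ A := hmemA.mpr (Or.inl hB)
      simp only [hB, hC, hA, if_true, if_false, List.map_nil, List.map_cons,
        List.nil_append, List.cons_append, List.singleton_append, Function.comp_apply]
      simp only [Nat.zero_add, Nat.lt_irrefl, if_false, ite_true, ite_false]
      congr 1
      all_goals first
        | (apply hM; intro m; simp only [Function.comp_apply]; split_ifs <;> omega)
        | (split_ifs <;> omega)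
    · by_cases hC : a ∈ C
      · have hA : a ∈ A := hmemA.mpr (Or.inr hC)
        simp only [hB, hC, hA, if_true, if_false, List.map_nil, List.map_cons,
          List.nil_append, List.cons_append, List.singleton_append, Function.comp_apply]
        congr 1
        all_goals first
          | (apply hM; intro m; simp only [Function.comp_apply]; split_ifs <;> omega)
          | (split_ifs <;> omega)
      · have hA : a ∉ A := fun h => by rcases hmemA.mp h with h | h <;> [exact hB h; exact hC h]
        simp only [hB, hC, hA, if_false, List.map_nil, List.nil_append]
        apply hM
        intro m
        simp only [Function.comp_apply]
        split_ifs <;> omega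


/-- `PLt w a m b n`: the `m`-th occurrence of `a` is strictly before the `n`-th occurrence of `b`. -/
def PLt (w : List (Finset E)) (a : E) (m : ℕ) (b : E) (n : ℕ) : Prop :=
  ∃ p q : ℕ, (occPos w a)[m]? = some p ∧ (occPos w b)[n]? = some q ∧ p < q

def PLe (w : List (Finset E)) (a : E) (m : ℕ) (b : E) (n : ℕ) : Prop :=
  ∃ p q : ℕ, (occPos w a)[m]? = some p ∧ (occPos w b)[n]? = some q ∧ p ≤ q

/-- The invariant preserved by comtrace congruence. -/
def CTInv (ser : E → E → Prop) (w v : List (Finset E)) : Prop :=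
  (∀ a : E, (occPos w a).length = (occPos v a).length) ∧
  (∀ a b m n, ¬ ser a b → (PLt w a m b n ↔ PLt v a m b n)) ∧
  (∀ a b m n, ¬ ser b a → (PLe w a m b n ↔ PLe v a m b n))

lemma CTInv_equivalence (ser : E → E → Prop) : Equivalence (CTInv (E := E) ser) := by
  constructor
  · intro w
    exact ⟨fun a => rfl, fun a b m n _ => Iff.rfl, fun a b m n _ => Iff.rfl⟩
  · rintro w v ⟨h1, h2, h3⟩
    exact ⟨fun a => (h1 a).symm, fun a b m n h => (h2 a b m n h).symm,
      fun a b m n h => (h3 a b m n h).symm⟩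
  · rintro w v t ⟨h1, h2, h3⟩ ⟨g1, g2, g3⟩
    exact ⟨fun a => (h1 a).trans (g1 a), fun a b m n h => (h2 a b m n h).trans (g2 a b m n h),
      fun a b m n h => (h3 a b m n h).trans (g3 a b m n h)⟩

lemma Inv_base (sim ser : E → E → Prop)
    (hsim_irr : ∀ a, ¬ sim a a) (hser_sub : ∀ a b, ser a b → sim a b)
    {w v : List (Finset E)} (h : CTBase sim ser w v) : CTInv ser w v := by
  obtain ⟨x, z, A, B, C, -, -, hA, hB, hC, hBC, hser, rfl, rfl⟩ := h
  have hdisj : ∀ e, e ∈ B → e ∉ C := fun e hb hc => hsim_irr e (hser_sub _ _ (hser e hb e hc))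
  set n := x.length with hn
  set g : E → ℕ → ℕ := fun a p =>
    if p < n then p else if p = n then (if a ∈ B then n else n + 1) else p + 1 with hg
  have hmap : ∀ a, occPos (x ++ B :: C :: z) a = (occPos (x ++ A :: z) a).map (g a) :=
    fun a => occPos_move x z A B C hBC hdisj a
  -- membership at position n means membership in A
  have hatA : ∀ (a : E) (p : ℕ), p ∈ occPos (x ++ A :: z) a → p = n → a ∈ A := by
    intro a p hp hpn
    subst hpn
    obtain ⟨S, hS, haS⟩ := (mem_occPos _ _ _).mp hp
    rw [List.getElem?_append_right (le_refl n)] at hS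
    simp only [hn, Nat.sub_self, List.getElem?_cons_zero, Option.some.injEq] at hS
    subst hS
    exact haS
  have hmemBC : ∀ e : E, e ∈ A ↔ (e ∈ B ∨ e ∈ C) := by
    intro e; rw [← hBC]; simp
  -- the arithmetic comparison lemmas
  have key_lt : ∀ (a b : E) (p q : ℕ), (p = n → a ∈ A) → (q = n → b ∈ A) → ¬ ser a b →
      (p < q ↔ g a p < g b q) := by
    intro a b p q hpA hqA hab
    by_cases haB : a ∈ B <;> by_cases hbB : b ∈ B <;>
        simp only [hg, haB, hbB, ite_true, ite_false] <;>
      split_ifs <;>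
        first
          | omega
          | (exfalso
             exact hab (hser a haB b (((hmemBC b).mp (hqA (by omega))).resolve_left hbB)))
  have key_le : ∀ (a b : E) (p q : ℕ), (p = n → a ∈ A) → (q = n → b ∈ A) → ¬ ser b a →
      (p ≤ q ↔ g a p ≤ g b q) := by
    intro a b p q hpA hqA hba
    by_cases haB : a ∈ B <;> by_cases hbB : b ∈ B <;>
        simp only [hg, haB, hbB, ite_true, ite_false] <;>
      split_ifs <;>
        first
          | omega
          | (exfalso
             exact hba (hser b hbB a (((hmemBC a).mp (hpA (by omega))).resolve_left haB)))
  refine ⟨fun a => by rw [hmap a, List.length_map], ?_, ?_⟩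
  · intro a b m m' hab
    constructor
    · rintro ⟨p, q, hp, hq, hpq⟩
      refine ⟨g a p, g b q, ?_, ?_, ?_⟩
      · rw [hmap a, List.getElem?_map, hp, Option.map_some]
      · rw [hmap b, List.getElem?_map, hq, Option.map_some]
      · exact (key_lt a b p q (hatA a p (List.mem_of_getElem? hp))
          (hatA b q (List.mem_of_getElem? hq)) hab).mp hpq
    · rintro ⟨p', q', hp', hq', hpq'⟩
      rw [hmap a, List.getElem?_map] at hp'
      rw [hmap b, List.getElem?_map] at hq'
      obtain ⟨p, hp, rfl⟩ := Option.map_eq_some_iff.mp hp'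
      obtain ⟨q, hq, rfl⟩ := Option.map_eq_some_iff.mp hq'
      exact ⟨p, q, hp, hq, (key_lt a b p q (hatA a p (List.mem_of_getElem? hp))
        (hatA b q (List.mem_of_getElem? hq)) hab).mpr hpq'⟩
  · intro a b m m' hba
    constructor
    · rintro ⟨p, q, hp, hq, hpq⟩
      refine ⟨g a p, g b q, ?_, ?_, ?_⟩
      · rw [hmap a, List.getElem?_map, hp, Option.map_some]
      · rw [hmap b, List.getElem?_map, hq, Option.map_some]
      · exact (key_le a b p q (hatA a p (List.mem_of_getElem? hp))
          (hatA b q (List.mem_of_getElem? hq)) hba).mp hpq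
    · rintro ⟨p', q', hp', hq', hpq'⟩
      rw [hmap a, List.getElem?_map] at hp'
      rw [hmap b, List.getElem?_map] at hq'
      obtain ⟨p, hp, rfl⟩ := Option.map_eq_some_iff.mp hp'
      obtain ⟨q, hq, rfl⟩ := Option.map_eq_some_iff.mp hq'
      exact ⟨p, q, hp, hq, (key_le a b p q (hatA a p (List.mem_of_getElem? hp))
        (hatA b q (List.mem_of_getElem? hq)) hba).mpr hpq'⟩

end AuxOcc

/-- A canonical step sequence has minimal length in its congruence class. -/
theorem stmt9 [DecidableEq E] [Fintype E] (sim ser : E → E → Prop)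
    (hsim_irr : ∀ a, ¬ sim a a) (hsim_symm : ∀ a b, sim a b → sim b a)
    (hser_sub : ∀ a b, ser a b → sim a b)
    (u v : List (Finset E)) (hu : IsStepSeq sim u) (hv : IsStepSeq sim v)
    (hcan : Canonical sim ser u) (huv : CTEquiv sim ser u v) :
    u.length ≤ v.length := by
  classical
  have hinv : CTInv ser u v :=
    huv (CTInv ser) (CTInv_equivalence ser)
      (fun a b hab => Inv_base sim ser hsim_irr hser_sub hab)
  obtain ⟨hlen, hlt, hle⟩ := hinv
  have key : ∀ i : ℕ, ∀ (a : E) (m : ℕ), (occPos u a)[m]? = some i →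
      ∀ q : ℕ, (occPos v a)[m]? = some q → i ≤ q := by
    intro i
    induction i using Nat.strong_induction_on with
    | _ i IH =>
      intro a m hm q hq
      rcases i with _ | j
      · omega
      have hiu : (j+1) ∈ occPos u a := List.mem_of_getElem? hm
      obtain ⟨Ai, hAi, haAi⟩ := (mem_occPos u a (j+1)).mp hiu
      have hilen : j + 1 < u.length := (List.getElem?_eq_some_iff.mp hAi).1
      have hAi' : u[j+1]'hilen = Ai := by
        rw [List.getElem?_eq_getElem hilen] at hAi
        exact Option.some.inj hAi
      have hAj? : u[j]? = some (u[j]'(by omega)) := List.getElem?_eq_getElem (by omega)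
      set Aj : Finset E := u[j]'(by omega) with hAjdef
      have hnFD : ¬ FD sim ser Aj Ai := by
        have hc := List.isChain_iff_getElem.mp hcan j (by omega)
        simpa [List.get_eq_getElem, hAi', ← hAjdef] using hc
      haveI : DecidablePred (fun c : E => ∀ m' q' : ℕ, (occPos u c)[m']? = some (j+1) →
        (occPos v c)[m']? = some q' → j + 1 ≤ q') := fun _ => Classical.propDecidable _
      set F : Finset E := Ai.filter (fun c => ∀ m' q' : ℕ, (occPos u c)[m']? = some (j+1) →
        (occPos v c)[m']? = some q' → j + 1 ≤ q') with hF
      have hAiF : Ai ⊆ F := by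
        by_contra hns
        have hne : (Ai \ F).Nonempty := by
          rw [Finset.sdiff_nonempty]
          exact hns
        apply hnFD
        refine ⟨Ai \ F, ⟨hne, ?_⟩, Finset.sdiff_subset, ?_, ?_⟩
        · intro a1 ha1 a2 ha2 hne'
          have hstep : IsStep sim Ai := hu Ai (List.mem_of_getElem? hAi)
          exact hstep.2 a1 (Finset.mem_sdiff.mp ha1).1 a2 (Finset.mem_sdiff.mp ha2).1 hne'
        · intro e he c hc
          by_contra hnser
          obtain ⟨hcAi, hcF⟩ := Finset.mem_sdiff.mp hc
          apply hcF
          rw [hF, Finset.mem_filter]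
          refine ⟨hcAi, ?_⟩
          intro m' q' hm' hq'
          have hje : j ∈ occPos u e := (mem_occPos u e j).mpr ⟨Aj, hAj?, he⟩
          obtain ⟨me, hmelt, hme⟩ := List.getElem_of_mem hje
          have hme? : (occPos u e)[me]? = some j := by
            rw [List.getElem?_eq_getElem hmelt, hme]
          have hPLt : PLt u e me c m' := ⟨j, j+1, hme?, hm', by omega⟩
          obtain ⟨p', q'', hp', hq'', hlt'⟩ := (hlt e c me m' hnser).mp hPLt
          have hq'eq : q'' = q' := Option.some.inj (hq''.symm.trans hq')
          have hjp : j ≤ p' := IH j (by omega) e me hme? p' hp'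
          omega
        · intro c hc b hb
          by_contra hnser
          obtain ⟨hcAi, hcF⟩ := Finset.mem_sdiff.mp hc
          have hbF : b ∈ F := by
            obtain ⟨hbAi, hbn⟩ := Finset.mem_sdiff.mp hb
            rw [Finset.mem_sdiff] at hbn
            push_neg at hbn
            exact hbn hbAi
          apply hcF
          rw [hF, Finset.mem_filter]
          refine ⟨hcAi, ?_⟩
          intro m' q' hm' hq'
          have hbAi : b ∈ Ai := (Finset.mem_filter.mp hbF).1
          have hjb : (j+1) ∈ occPos u b := (mem_occPos u b _).mpr ⟨Ai, hAi, hbAi⟩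
          obtain ⟨mb, hmblt, hmb⟩ := List.getElem_of_mem hjb
          have hmb? : (occPos u b)[mb]? = some (j+1) := by
            rw [List.getElem?_eq_getElem hmblt, hmb]
          have hPLe : PLe u b mb c m' := ⟨j+1, j+1, hmb?, hm', le_refl _⟩
          obtain ⟨pb, q'', hpb, hq'', hle'⟩ := (hle b c mb m' hnser).mp hPLe
          have hq'eq : q'' = q' := Option.some.inj (hq''.symm.trans hq')
          have hjb' : j + 1 ≤ pb := (Finset.mem_filter.mp hbF).2 mb pb hmb? hpb
          omega
      have haF : a ∈ F := hAiF haAi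
      exact (Finset.mem_filter.mp haF).2 m q hm hq
  -- conclude
  rcases Nat.eq_zero_or_pos u.length with h0 | hpos
  · omega
  have hlast : u.length - 1 < u.length := by omega
  have hAk? : u[u.length - 1]? = some (u[u.length-1]'hlast) := List.getElem?_eq_getElem hlast
  obtain ⟨a, ha⟩ := (hu _ (List.mem_of_getElem? hAk?)).1
  have hmem : (u.length - 1) ∈ occPos u a := (mem_occPos u a _).mpr ⟨_, hAk?, ha⟩
  obtain ⟨m, hmlt, hm⟩ := List.getElem_of_mem hmem
  have hm? : (occPos u a)[m]? = some (u.length - 1) := by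
    rw [List.getElem?_eq_getElem hmlt, hm]
  have hmlt' : m < (occPos v a).length := by rw [← hlen a]; exact hmlt
  have hq? : (occPos v a)[m]? = some ((occPos v a)[m]'hmlt') := List.getElem?_eq_getElem hmlt'
  have h1 := key (u.length - 1) a m hm? _ hq?
  have h2 : (occPos v a)[m]'hmlt' < v.length :=
    lt_length_of_mem_occPos (List.mem_of_getElem? hq?)
  omega
end
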